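/- arXiv:1011.3243 — 3 statements merged into one kernel-verified Lean document; each statement's English description precedes it below -/
import Mathlib

section
/- Let n ≥ 1 and let X and Y be (n,1)-categories. A map F : X → Y of simplicial sets is an inner fibration if and only if it has the right lifting property with respect to the inner horn inclusions Λ[m,k] → Δ[m] for all m and k with 0 < k < m ≤ n. -/
open CategoryTheory Simplicial SSet

/-- A simplicial set `X` has unique liftings along a map `i : A ⟶ B` if every map `A ⟶ X`
extends, via a unique map `B ⟶ X`, along `i`. -/
def HasUniqueLiftsAlong {A B : SSet} (i : A ⟶ B) (X : SSet) : Prop :=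
  ∀ u : A ⟶ X, ∃! w : B ⟶ X, i ≫ w = u

/-- `X` is an `(n,1)`-category (in Lurie's sense): a quasicategory in which every inner horn
`Λ[m, k] → X` with `m > n` extends uniquely to `Δ[m]`. -/
def IsN1Category (n : ℕ) (X : SSet) : Prop :=
  Quasicategory X ∧
    ∀ (m : ℕ) (k : Fin (m + 1)), n < m → 0 < k → k < Fin.last m →
      HasUniqueLiftsAlong ((horn m k).ι) X

/-- A map of simplicial sets is an inner fibration if it has the right lifting property with
respect to every inner horn inclusion. -/
def IsInnerFibration {X Y : SSet} (F : X ⟶ Y) : Prop :=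
  ∀ (m : ℕ) (k : Fin (m + 1)), 0 < k → k < Fin.last m →
    HasLiftingProperty ((horn m k).ι) F

theorem stmt4 (n : ℕ) (hn : 1 ≤ n) (X Y : SSet)
    (hX : IsN1Category n X) (hY : IsN1Category n Y) (F : X ⟶ Y) :
    IsInnerFibration F ↔
      ∀ (m : ℕ) (k : Fin (m + 1)), m ≤ n → 0 < k → k < Fin.last m →
        HasLiftingProperty ((horn m k).ι) F := by
  constructor
  · intro h m k _ hk hk'
    exact h m k hk hk'
  · intro h m k hk hk'
    rcases le_or_gt m n with hm | hm
    · exact h m k hm hk hk'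
    · constructor
      intro f g sq
      obtain ⟨w, hw, _⟩ := hX.2 m k hm hk hk' f
      obtain ⟨v, hv, hvu⟩ := hY.2 m k hm hk hk' (f ≫ F)
      refine ⟨⟨⟨w, hw, ?_⟩⟩⟩
      have h1 : (horn m k).ι ≫ (w ≫ F) = f ≫ F := by
        rw [← Category.assoc, hw]
      have h2 : (horn m k).ι ≫ g = f ≫ F := sq.w.symm
      rw [hvu _ h1, hvu _ h2]
end

section
/- Let C be a category and X, Y objects of C. Suppose given spans a : U → X, b : U → Y and c : V → Y, d : V → X such that the pullback P of b and c exists, with projections p : P → U and q : P → V, and the pullback Q of d and a exists, with projections r : Q → V and s : Q → U. Suppose there is an isomorphism e : P ≅ X with p ≫ a = e.hom and q ≫ d = e.hom, and an isomorphism e' : Q ≅ Y with r ≫ c = e'.hom and s ≫ b = e'.hom (i.e. the two composite spans, formed by pullback, are isomorphic as spans to the identity spans on X and on Y respectively). Then a, b, c and d are all isomorphisms; in particular X and Y are isomorphic in C. (This proves that two objects are equivalent in the bicategory of spans in C if and only if they are isomorphic in C.) -/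
open CategoryTheory Limits

theorem stmt7 {C : Type*} [Category C] {X Y U V P Q : C}
    (a : U ⟶ X) (b : U ⟶ Y) (c : V ⟶ Y) (d : V ⟶ X)
    (p : P ⟶ U) (q : P ⟶ V) (hP : IsPullback p q b c)
    (r : Q ⟶ V) (s : Q ⟶ U) (hQ : IsPullback r s d a)
    (e : P ≅ X) (he₁ : p ≫ a = e.hom) (he₂ : q ≫ d = e.hom)
    (e' : Q ≅ Y) (he₁' : r ≫ c = e'.hom) (he₂' : s ≫ b = e'.hom) :
    IsIso a ∧ IsIso b ∧ IsIso c ∧ IsIso d ∧ Nonempty (X ≅ Y) := by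
  -- a is mono
  have ha : Mono a := ⟨fun {W} f g hfg => by
    have hu : (f ≫ a ≫ e.inv ≫ q) ≫ d = f ≫ a := by
      simp only [Category.assoc, he₂]; simp
    have hu' : (f ≫ a ≫ e.inv ≫ q) ≫ d = g ≫ a := hu.trans hfg
    have h1 : hQ.lift _ f hu ≫ e'.hom = hQ.lift _ g hu' ≫ e'.hom := by
      simp only [← he₁', ← Category.assoc, hQ.lift_fst]
    have h2 : hQ.lift _ f hu = hQ.lift _ g hu' := by
      have := (cancel_mono e'.hom).mp h1; exact this
    calc f = hQ.lift _ f hu ≫ s := (hQ.lift_snd _ _ _).symm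
      _ = hQ.lift _ g hu' ≫ s := by rw [h2]
      _ = g := hQ.lift_snd _ _ _⟩
  -- b is mono
  have hb : Mono b := ⟨fun {W} f g hfg => by
    have hu : f ≫ b = (f ≫ b ≫ e'.inv ≫ r) ≫ c := by
      simp only [Category.assoc, he₁']; simp
    have hu' : g ≫ b = (f ≫ b ≫ e'.inv ≫ r) ≫ c := hfg ▸ hu
    have h1 : hP.lift f _ hu ≫ e.hom = hP.lift g _ hu' ≫ e.hom := by
      simp only [← he₂, ← Category.assoc, hP.lift_snd]
    have h2 : hP.lift f _ hu = hP.lift g _ hu' := (cancel_mono e.hom).mp h1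
    calc f = hP.lift f _ hu ≫ p := (hP.lift_fst _ _ _).symm
      _ = hP.lift g _ hu' ≫ p := by rw [h2]
      _ = g := hP.lift_fst _ _ _⟩
  -- c is mono
  have hc : Mono c := ⟨fun {W} f g hfg => by
    have hu : (f ≫ c ≫ e'.inv ≫ s) ≫ b = f ≫ c := by
      simp only [Category.assoc, he₂']; simp
    have hu' : (f ≫ c ≫ e'.inv ≫ s) ≫ b = g ≫ c := hu.trans hfg
    have h1 : hP.lift _ f hu ≫ e.hom = hP.lift _ g hu' ≫ e.hom := by
      simp only [← he₁, ← Category.assoc, hP.lift_fst]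
    have h2 : hP.lift _ f hu = hP.lift _ g hu' := (cancel_mono e.hom).mp h1
    calc f = hP.lift _ f hu ≫ q := (hP.lift_snd _ _ _).symm
      _ = hP.lift _ g hu' ≫ q := by rw [h2]
      _ = g := hP.lift_snd _ _ _⟩
  -- d is mono
  have hd : Mono d := ⟨fun {W} f g hfg => by
    have hu : f ≫ d = (f ≫ d ≫ e.inv ≫ p) ≫ a := by
      simp only [Category.assoc, he₁]; simp
    have hu' : g ≫ d = (f ≫ d ≫ e.inv ≫ p) ≫ a := hfg ▸ hu
    have h1 : hQ.lift f _ hu ≫ e'.hom = hQ.lift g _ hu' ≫ e'.hom := by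
      simp only [← he₂', ← Category.assoc, hQ.lift_snd]
    have h2 : hQ.lift f _ hu = hQ.lift g _ hu' := (cancel_mono e'.hom).mp h1
    calc f = hQ.lift f _ hu ≫ r := (hQ.lift_fst _ _ _).symm
      _ = hQ.lift g _ hu' ≫ r := by rw [h2]
      _ = g := hQ.lift_fst _ _ _⟩
  -- split epi structures
  have sa : (e.inv ≫ p) ≫ a = 𝟙 X := by rw [Category.assoc, he₁]; simp
  have sb : (e'.inv ≫ s) ≫ b = 𝟙 Y := by rw [Category.assoc, he₂']; simp
  have sc : (e'.inv ≫ r) ≫ c = 𝟙 Y := by rw [Category.assoc, he₁']; simp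
  have sd : (e.inv ≫ q) ≫ d = 𝟙 X := by rw [Category.assoc, he₂]; simp
  have isoA : IsIso a := ⟨e.inv ≫ p, by
    rw [← cancel_mono a, Category.assoc, sa]; simp, sa⟩
  have isoB : IsIso b := ⟨e'.inv ≫ s, by
    rw [← cancel_mono b, Category.assoc, sb]; simp, sb⟩
  have isoC : IsIso c := ⟨e'.inv ≫ r, by
    rw [← cancel_mono c, Category.assoc, sc]; simp, sc⟩
  have isoD : IsIso d := ⟨e.inv ≫ q, by
    rw [← cancel_mono d, Category.assoc, sd]; simp, sd⟩
  exact ⟨isoA, isoB, isoC, isoD, ⟨(asIso a).symm ≪≫ asIso b⟩⟩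
end

section
/- Mackey property (Beck–Chevalley for finite sets, fibrewise form): let W, X, Y, Z be finite types with maps f : W → X, α : W → Y, β : X → Z, g : Y → Z such that β ∘ f = g ∘ α, and suppose the square is a pullback of types, i.e. the induced map W → {p : X × Y // β p.1 = g p.2}, w ↦ (f w, α w), is a bijection. Let A : Y → Type be a family of finite types. Then for every x : X there is an equivalence (∀ w : {w : W // f w = x}, A (α w)) ≃ (∀ y : {y : Y // g y = β x}, A y); that is, the fibre over x of the pushforward along f of the pullback along α of A is equivalent to the fibre over x of the pullback along β of the pushforward along g of A. -/
theorem stmt8 (W X Y Z : Type) [Finite W] [Finite X] [Finite Y] [Finite Z]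
    (f : W → X) (α : W → Y) (β : X → Z) (g : Y → Z)
    (hcomm : ∀ w : W, β (f w) = g (α w))
    (hpb : Function.Bijective
      (fun w : W => (⟨(f w, α w), hcomm w⟩ : {p : X × Y // β p.1 = g p.2})))
    (A : Y → Type) [∀ y : Y, Finite (A y)] (x : X) :
    Nonempty ((∀ w : {w : W // f w = x}, A (α w.1)) ≃ (∀ y : {y : Y // g y = β x}, A y.1)) := by
  have hφ : Function.Bijective (fun w : {w : W // f w = x} =>
      (⟨α w.1, by rw [← hcomm, w.2]⟩ : {y : Y // g y = β x})) := by
    constructor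
    · intro a b hab
      apply Subtype.ext
      apply hpb.1
      apply Subtype.ext
      simp only [Subtype.mk.injEq] at hab ⊢
      exact Prod.ext (a.2.trans b.2.symm) hab
    · intro y
      obtain ⟨w, hw⟩ := hpb.2 ⟨(x, y.1), y.2.symm⟩
      simp only [Subtype.mk.injEq, Prod.mk.injEq] at hw
      exact ⟨⟨w, hw.1⟩, Subtype.ext hw.2⟩
  exact ⟨Equiv.piCongrLeft (fun y => A y.1) (Equiv.ofBijective _ hφ)⟩
end
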